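/- Let n be a positive odd integer and ζ a primitive n-th root of unity. Then sum_{k=0}^{n-1} ((ζ; ζ^2)_k (-1; ζ^2)_k / (ζ^2; ζ^2)_k) ζ^(2k) = (-1)^((n-1)/2). -/

import Mathlib

open Finset

noncomputable def qb (q : ℂ) : ℕ → ℕ → ℂ
  | 0, 0 => 1
  | 0, _+1 => 0
  | _+1, 0 => 1
  | N+1, k+1 => qb q N k + q^(k+1) * qb q N (k+1)

lemma qb_zero (q : ℂ) (N : ℕ) : qb q N 0 = 1 := by cases N <;> rfl

lemma qb_succ (q : ℂ) (N k : ℕ) :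
    qb q (N+1) (k+1) = qb q N k + q^(k+1) * qb q N (k+1) := rfl

lemma qb_big (q : ℂ) : ∀ N k, N < k → qb q N k = 0 := by
  intro N
  induction N with
  | zero =>
    intro k hk
    match k, hk with
    | k+1, _ => rfl
  | succ N ih =>
    intro k hk
    match k, hk with
    | k+1, hk =>
      rw [qb_succ, ih k (by omega), ih (k+1) (by omega)]
      ring

lemma two_choose_two : ∀ m : ℕ, 2 * m.choose 2 = m * (m - 1) := by
  intro m
  induction m with
  | zero => rfl
  | succ m ih =>
    have h1 := Nat.choose_succ_succ m 1
    norm_num at h1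
    have h3 : (m+1) * m = m * (m-1) + 2*m := by
      cases m with
      | zero => rfl
      | succ s => simp only [Nat.succ_sub_one]; ring
    simp only [Nat.succ_sub_one]
    omega

lemma choose_two_succ (d : ℕ) : (d+1).choose 2 = d.choose 2 + d := by
  have h := Nat.choose_succ_succ d 1
  norm_num at h
  omega

lemma qb_prod (q : ℂ) : ∀ N k, k ≤ N →
    qb q N k * ∏ i ∈ range k, (1 - q^(i+1)) = ∏ i ∈ range k, (1 - q^(N-k+1+i)) := by
  intro N
  induction N with
  | zero =>
    intro k hk
    interval_cases k
    simp [qb_zero]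
  | succ N ih =>
    intro k hk
    match k with
    | 0 => simp [qb_zero]
    | k+1 =>
      have hkN : k ≤ N := by omega
      rw [qb_succ]
      have hre : ∀ i, N + 1 - (k+1) + 1 + i = N - k + 1 + i := by intro i; omega
      rcases Nat.lt_or_ge k N with hlt | hge
      · -- k < N
        have ih1 := ih k hkN
        have ih2 := ih (k+1) hlt
        have hsplit : ∏ i ∈ range (k+1), (1 - q^(i+1))
            = (∏ i ∈ range k, (1 - q^(i+1))) * (1 - q^(k+1)) := prod_range_succ _ _
        have hsecond : ∏ i ∈ range (k+1), (1 - q^(N-(k+1)+1+i))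
            = (1 - q^(N-k)) * ∏ i ∈ range k, (1 - q^(N-k+1+i)) := by
          rw [prod_range_succ']
          rw [show N-(k+1)+1+0 = N-k from by omega]
          rw [mul_comm]
          congr 1
          refine prod_congr rfl fun i _ => ?_
          congr 2
          omega
        rw [hsecond, hsplit] at ih2
        have htarget : ∏ i ∈ range (k+1), (1 - q^(N+1-(k+1)+1+i))
            = (∏ i ∈ range k, (1 - q^(N-k+1+i))) * (1 - q^(N+1)) := by
          rw [prod_range_succ, show N+1-(k+1)+1+k = N+1 from by omega]
          congr 1
          refine prod_congr rfl fun i _ => ?_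
          congr 2
          omega
        rw [htarget, hsplit]
        have hqq : q^(k+1) * q^(N-k) = q^(N+1) := by
          rw [← pow_add]
          congr 1
          omega
        linear_combination (1 - q^(k+1)) * ih1 + q^(k+1) * ih2
          - (∏ i ∈ range k, (1 - q^(N-k+1+i))) * hqq
      · -- k = N
        have hkN' : k = N := by omega
        subst hkN'
        rw [qb_big q k (k+1) (by omega)]
        have ih1 := ih k le_rfl
        have hsplit : ∏ i ∈ range (k+1), (1 - q^(i+1))
            = (∏ i ∈ range k, (1 - q^(i+1))) * (1 - q^(k+1)) := prod_range_succ _ _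
        have htarget : ∏ i ∈ range (k+1), (1 - q^(k+1-(k+1)+1+i))
            = (∏ i ∈ range k, (1 - q^(k-k+1+i))) * (1 - q^(k+1)) := by
          rw [prod_range_succ, show k+1-(k+1)+1+k = k+1 from by omega]
          congr 1
          refine prod_congr rfl fun i _ => ?_
          congr 2
          omega
        rw [htarget, hsplit]
        linear_combination (1 - q^(k+1)) * ih1

lemma qb_sum (q : ℂ) : ∀ N, ∀ b : ℂ,
    ∑ k ∈ range (N+1), qb q N k * (-1)^k * q^((N-k).choose 2) * ∏ i ∈ range k, (1 - b*q^i)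
      = b^N * q^(N.choose 2) := by
  intro N
  induction N with
  | zero => intro b; simp [qb_zero]
  | succ N ih =>
    intro b
    rw [Finset.sum_range_succ']
    have hkey : ∀ j ∈ range (N+1),
        qb q (N+1) (j+1) * (-1)^(j+1) * q^((N+1-(j+1)).choose 2) * ∏ i ∈ range (j+1), (1 - b*q^i)
        = (-(1-b)) * (qb q N j * (-1)^j * q^((N-j).choose 2) * ∏ i ∈ range j, (1 - (b*q)*q^i))
          + q^N * (qb q N (j+1) * (-1)^(j+1) * q^((N-(j+1)).choose 2)
              * ∏ i ∈ range (j+1), (1 - b*q^i)) := by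
      intro j hj
      rw [mem_range] at hj
      rw [qb_succ, show N+1-(j+1) = N-j from by omega]
      have hp : ∏ i ∈ range (j+1), (1 - b*q^i)
          = (1-b) * ∏ i ∈ range j, (1 - (b*q)*q^i) := by
        rw [prod_range_succ', pow_zero, mul_one, mul_comm]
        congr 1
        refine prod_congr rfl fun i _ => ?_
        rw [pow_succ]
        ring
      rcases Nat.lt_or_ge j N with hlt | hge
      · have hexp : q^(j+1) * q^((N-j).choose 2) = q^N * q^((N-(j+1)).choose 2) := by
          rw [← pow_add, ← pow_add]
          congr 1
          have hd : N - j = (N-(j+1)) + 1 := by omega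
          rw [hd, choose_two_succ]
          omega
        rw [hp]
        linear_combination ((-1)^(j+1) * qb q N (j+1) * (1-b) * ∏ i ∈ range j, (1 - (b*q)*q^i)) * hexp
      · have hjN : j = N := by omega
        subst hjN
        rw [qb_big q j (j+1) (by omega), hp]
        ring
    rw [Finset.sum_congr rfl hkey, Finset.sum_add_distrib, ← Finset.mul_sum, ← Finset.mul_sum,
      ih (b*q)]
    have hzero_last : qb q N (N+1) * (-1)^(N+1) * q^((N-(N+1)).choose 2)
        * ∏ i ∈ range (N+1), (1 - b*q^i) = 0 := by
      rw [qb_big q N (N+1) (by omega)]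
      ring
    rw [Finset.sum_range_succ (fun j => qb q N (j+1) * (-1)^(j+1) * q^((N-(j+1)).choose 2)
        * ∏ i ∈ range (j+1), (1 - b*q^i)), hzero_last, add_zero]
    have hS : (∑ j ∈ range N, qb q N (j+1) * (-1)^(j+1) * q^((N-(j+1)).choose 2)
        * ∏ i ∈ range (j+1), (1 - b*q^i))
        = b^N * q^(N.choose 2) - q^(N.choose 2) := by
      have h0 := ih b
      rw [Finset.sum_range_succ'] at h0
      simp only [qb_zero, pow_zero, Nat.sub_zero, one_mul, mul_one, prod_range_zero] at h0
      linear_combination h0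
    rw [hS]
    have hch : q^((N+1-0).choose 2) = q^(N.choose 2) * q^N := by
      rw [← pow_add]
      congr 1
      rw [Nat.sub_zero, choose_two_succ]
    simp only [qb_zero, pow_zero, Nat.sub_zero, one_mul, mul_one, prod_range_zero]
    rw [show (N+1).choose 2 = N.choose 2 + N from choose_two_succ N, pow_add, mul_pow]
    ring

lemma harith (M k T E C : ℕ) (hk : k ≤ M) (h1 : E + T = k*M) (h2 : T*2 = k*(k-1))
    (h3 : 2*C = (M-k)*(M-k-1)) : M*(M-1) + 2*k = 2*C + 2*E := by
  rcases Nat.eq_zero_or_pos k with rfl | hk1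
  · have hE : E = 0 := by omega
    have hC : 2*C = M*(M-1) := by simpa using h3
    simp only [Nat.mul_zero, add_zero, hE]
    exact hC.symm
  · rcases Nat.lt_or_ge k M with hkM | hge
    · have c1 : 1 ≤ M := by omega
      have c2 : 1 ≤ M - k := by omega
      zify [c1, hk1, hk, c2] at h1 h2 h3 ⊢
      linear_combination (-2:ℤ)*h1 + h2 - h3
    · have hkM : k = M := by omega
      subst hkM
      have hC : C = 0 := by simp [Nat.sub_self] at h3; omega
      subst hC
      zify [hk1] at h1 h2 ⊢
      linear_combination (-2:ℤ)*h1 + h2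

/-- For odd `n` and a primitive `n`-th root of unity `ζ`,
`∑_{k=0}^{n-1} (ζ;ζ²)_k (-1;ζ²)_k / (ζ²;ζ²)_k · ζ^(2k) = (-1)^((n-1)/2)`. -/
theorem guo_congruence_at_root_of_unity (n : ℕ) (hn : 0 < n) (ho : Odd n) (ζ : ℂ)
    (hζ : IsPrimitiveRoot ζ n) :
    ∑ k ∈ Finset.range n,
        (∏ i ∈ Finset.range k, (1 - ζ * (ζ ^ 2) ^ i)) *
            (∏ i ∈ Finset.range k, (1 - (-1) * (ζ ^ 2) ^ i)) /
          (∏ i ∈ Finset.range k, (1 - ζ ^ 2 * (ζ ^ 2) ^ i)) * ζ ^ (2 * k) =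
      (-1) ^ ((n - 1) / 2) := by
  obtain ⟨M, hM⟩ : ∃ M, n = 2*M+1 := by obtain ⟨m, hm⟩ := ho; exact ⟨m, by omega⟩
  have hζ0 : ζ ≠ 0 := hζ.ne_zero hn.ne'
  have hζn : ζ ^ n = 1 := hζ.pow_eq_one
  have hne : ∀ i, 0 < i → i < n → ζ ^ i ≠ 1 := fun i h1 h2 =>
    hζ.pow_ne_one_of_pos_of_lt h1.ne' h2
  set q : ℂ := ζ ^ 2 with hq
  have hζqM : ∀ j, j ≤ M → ζ * q ^ j * q ^ (M - j) = 1 := by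
    intro j hj
    rw [mul_assoc, ← pow_add, show j + (M - j) = M from by omega, hq, ← pow_mul,
      ← pow_succ', show 2*M+1 = n from hM.symm]
    exact hζn
  -- restrict the sum to k ≤ M
  have hsub : Finset.range (M+1) ⊆ Finset.range n := by
    intro x hx; rw [Finset.mem_range] at *; omega
  rw [← Finset.sum_subset hsub ?hzero]
  case hzero =>
    intro k hk hk2
    simp only [Finset.mem_range, not_lt] at hk hk2
    have hMk : M ∈ Finset.range k := Finset.mem_range.2 (by omega)
    have hf : (1 : ℂ) - ζ * q ^ M = 0 := by
      have h := hζqM M le_rfl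
      simp only [Nat.sub_self, pow_zero, mul_one] at h
      rw [h, sub_self]
    rw [Finset.prod_eq_zero hMk hf, zero_mul, zero_div, zero_mul]
  rw [show (n-1)/2 = M from by omega]
  apply mul_left_cancel₀ (pow_ne_zero (M*(M-1)) hζ0)
  rw [Finset.mul_sum]
  have hterm : ∀ k ∈ Finset.range (M+1),
      ζ ^ (M*(M-1)) * ((∏ i ∈ Finset.range k, (1 - ζ * q ^ i)) *
            (∏ i ∈ Finset.range k, (1 - (-1) * q ^ i)) /
          (∏ i ∈ Finset.range k, (1 - q * q ^ i)) * ζ ^ (2 * k))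
      = qb q M k * (-1)^k * q^((M-k).choose 2) *
          ∏ i ∈ Finset.range k, (1 - (-1) * q ^ i) := by
    intro k hk
    rw [Finset.mem_range] at hk
    have hkM : k ≤ M := by omega
    have hD : (∏ i ∈ Finset.range k, (1 - q * q ^ i)) ≠ 0 := by
      rw [Finset.prod_ne_zero_iff]
      intro i hi
      rw [Finset.mem_range] at hi
      have hqi : q * q ^ i = ζ ^ (2*(i+1)) := by
        rw [hq, ← pow_mul, ← pow_add]
        congr 1
        ring
      rw [hqi]
      exact sub_ne_zero.mpr (Ne.symm (hne (2*(i+1)) (by omega) (by omega)))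
    have hDform : (∏ i ∈ Finset.range k, (1 - q * q ^ i))
        = ∏ i ∈ Finset.range k, (1 - q ^ (i+1)) := by
      refine Finset.prod_congr rfl fun i _ => ?_
      rw [pow_succ]; ring
    have hB := qb_prod q M k hkM
    have hrev : (∏ i ∈ Finset.range k, (1 - q ^ (M-k+1+i)))
        = ∏ j ∈ Finset.range k, (1 - q ^ (M-j)) := by
      rw [← Finset.prod_range_reflect (fun j => 1 - q ^ (M-j)) k]
      refine Finset.prod_congr rfl fun i hi => ?_
      rw [Finset.mem_range] at hi
      congr 2
      omega
    have hfacs : (∏ j ∈ Finset.range k, (1 - q ^ (M-j)))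
        = (∏ j ∈ Finset.range k, (1 - ζ * q ^ j)) * ((-1)^k * q ^ (∑ j ∈ Finset.range k, (M-j))) := by
      have e1 : ∏ j ∈ Finset.range k, ((1 - ζ * q ^ j) * ((-1) * q ^ (M-j)))
          = ∏ j ∈ Finset.range k, (1 - q ^ (M-j)) := by
        refine Finset.prod_congr rfl fun j hj => ?_
        rw [Finset.mem_range] at hj
        have h1 := hζqM j (by omega)
        linear_combination h1
      rw [← e1, Finset.prod_mul_distrib, Finset.prod_mul_distrib, Finset.prod_const,
        Finset.card_range, Finset.prod_pow_eq_pow_sum]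
    have hqbD : qb q M k * (∏ i ∈ Finset.range k, (1 - q * q ^ i))
        = (∏ j ∈ Finset.range k, (1 - ζ * q ^ j)) * ((-1)^k * q ^ (∑ j ∈ Finset.range k, (M-j))) := by
      rw [hDform, hB, hrev, hfacs]
    have hsq : ((-1 : ℂ))^k * (-1)^k = 1 := by
      rw [← pow_add, show k+k = 2*k from by ring, pow_mul]
      norm_num
    have hqbD2 : (∏ j ∈ Finset.range k, (1 - ζ * q ^ j)) * q ^ (∑ j ∈ Finset.range k, (M-j))
        = (-1)^k * (qb q M k * (∏ i ∈ Finset.range k, (1 - q * q ^ i))) := by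
      rw [hqbD]
      linear_combination (-(∏ j ∈ Finset.range k, (1 - ζ * q ^ j)) * q ^ (∑ j ∈ Finset.range k, (M-j))) * hsq
    have hexp : ζ ^ (M*(M-1)) * ζ ^ (2*k)
        = q ^ ((M-k).choose 2) * q ^ (∑ j ∈ Finset.range k, (M-j)) := by
      rw [hq, ← pow_mul, ← pow_mul, ← pow_add, ← pow_add]
      congr 1
      have h1 : (∑ j ∈ Finset.range k, (M-j)) + (∑ j ∈ Finset.range k, j) = k * M := by
        rw [← Finset.sum_add_distrib]
        rw [Finset.sum_congr rfl (fun j hj => by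
          rw [Finset.mem_range] at hj
          omega : ∀ j ∈ Finset.range k, M - j + j = M)]
        rw [Finset.sum_const, Finset.card_range, smul_eq_mul]
      have h2 := Finset.sum_range_id_mul_two k
      have h3 := two_choose_two (M-k)
      have := harith M k (∑ j ∈ Finset.range k, j) (∑ j ∈ Finset.range k, (M-j))
        ((M-k).choose 2) hkM h1 h2 h3
      omega
    rw [div_mul_eq_mul_div, mul_div_assoc', div_eq_iff hD]
    linear_combination ((∏ j ∈ Finset.range k, (1 - ζ * q ^ j)) *
        (∏ i ∈ Finset.range k, (1 - (-1) * q ^ i))) * hexp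
      + (q ^ ((M-k).choose 2) * (∏ i ∈ Finset.range k, (1 - (-1) * q ^ i))) * hqbD2
  rw [Finset.sum_congr rfl hterm, qb_sum q M (-1)]
  have hqc : q ^ (M.choose 2) = ζ ^ (M*(M-1)) := by
    rw [hq, ← pow_mul]
    congr 1
    exact two_choose_two M
  rw [hqc]
  ring
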